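/- Let M' = (V, E') and M'' = (V, E'') be two matchings viewed as simple graphs on a common finite vertex set V (i.e., each of E' and E'' is a set of pairwise vertex-disjoint edges), with adjacency matrices A' and A''. Then A' and A'' commute if and only if every connected component of the union graph (V, E' ∪ E'') is an isolated vertex (K₁), a single edge (K₂), or a cycle on 4 vertices (C₄). -/

import Mathlib

open Matrix

set_option linter.unusedSectionVars false

section Aux
variable {V : Type*} [Fintype V] [DecidableEq V]

open SimpleGraph in
lemma aux_entry (G H : SimpleGraph V) [DecidableRel G.Adj] [DecidableRel H.Adj]
    (hG : ∀ v w w' : V, G.Adj v w → G.Adj v w' → w = w') (u v : V) :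
    (G.adjMatrix ℝ * H.adjMatrix ℝ) u v = if ∃ w, G.Adj u w ∧ H.Adj w v then 1 else 0 := by
  rw [adjMatrix_mul_apply]
  by_cases h : ∃ a, G.Adj u a
  · obtain ⟨a, ha⟩ := h
    have hnb : G.neighborFinset u = {a} := by
      ext x
      simp only [mem_neighborFinset, Finset.mem_singleton]
      exact ⟨fun hx => hG u x a hx ha, fun hx => hx ▸ ha⟩
    rw [hnb, Finset.sum_singleton, adjMatrix_apply]
    have : (∃ w, G.Adj u w ∧ H.Adj w v) ↔ H.Adj a v := by
      constructor
      · rintro ⟨w, hw, hwv⟩; rwa [hG u w a hw ha] at hwv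
      · exact fun hx => ⟨a, ha, hx⟩
    simp [this]
  · have hnb : G.neighborFinset u = ∅ := by
      ext x
      simp only [mem_neighborFinset, Finset.notMem_empty, iff_false]
      exact fun hx => h ⟨x, hx⟩
    rw [hnb, Finset.sum_empty]
    have : ¬ ∃ w, G.Adj u w ∧ H.Adj w v := fun ⟨w, hw, _⟩ => h ⟨w, hw⟩
    simp [this]

open SimpleGraph in
lemma aux_iso_of_map {W : Type*} (G : SimpleGraph V) (H : SimpleGraph W)
    (m : W → V) (hinj : Function.Injective m)
    (hadj : ∀ i j, G.Adj (m i) (m j) ↔ H.Adj i j) :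
    Nonempty (SimpleGraph.induce (Set.range m) G ≃g H) := by
  refine ⟨⟨(Equiv.ofInjective m hinj).symm, ?_⟩⟩
  intro a b
  have ha : m ((Equiv.ofInjective m hinj).symm a) = a.1 :=
    congrArg Subtype.val ((Equiv.ofInjective m hinj).apply_symm_apply a)
  have hb : m ((Equiv.ofInjective m hinj).symm b) = b.1 :=
    congrArg Subtype.val ((Equiv.ofInjective m hinj).apply_symm_apply b)
  rw [← hadj, ha, hb]
  rfl

open SimpleGraph in
lemma aux_supp_eq {G : SimpleGraph V} {S : Set V} {v0 : V}
    (h0 : v0 ∈ S) (hcl : ∀ x y, x ∈ S → G.Adj x y → y ∈ S)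
    (hre : ∀ x ∈ S, G.Reachable v0 x) :
    (G.connectedComponentMk v0).supp = S := by
  have walk_mem : ∀ (x y : V), G.Walk x y → x ∈ S → y ∈ S := by
    intro x y p
    induction p with
    | nil => exact id
    | cons h _ ih => exact fun hx => ih (hcl _ _ hx h)
  ext x
  rw [ConnectedComponent.mem_supp_iff]
  constructor
  · intro hx
    rw [ConnectedComponent.eq] at hx
    obtain ⟨p⟩ := hx.symm
    exact walk_mem _ _ p h0
  · intro hx
    exact (ConnectedComponent.eq).mpr (hre x hx).symm

open SimpleGraph in
lemma aux_key (G H : SimpleGraph V)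
    (hG : ∀ v w w' : V, G.Adj v w → G.Adj v w' → w = w')
    (hH : ∀ v w w' : V, H.Adj v w → H.Adj v w' → w = w')
    (hcl : ∀ c : (G ⊔ H).ConnectedComponent,
        Nonempty (SimpleGraph.induce c.supp (G ⊔ H) ≃g (⊥ : SimpleGraph (Fin 1))) ∨
        Nonempty (SimpleGraph.induce c.supp (G ⊔ H) ≃g (⊤ : SimpleGraph (Fin 2))) ∨
        Nonempty (SimpleGraph.induce c.supp (G ⊔ H) ≃g SimpleGraph.cycleGraph 4)) :
    ∀ u v, (∃ w, G.Adj u w ∧ H.Adj w v) → (∃ w, H.Adj u w ∧ G.Adj w v) := by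
  rintro u v ⟨w, huw, hwv⟩
  by_cases hvu : v = u
  · subst hvu
    exact ⟨w, hwv.symm, huw.symm⟩
  set c := (G ⊔ H).connectedComponentMk u with hcdef
  have hu : u ∈ c.supp := rfl
  have hAuw : (G ⊔ H).Adj u w := (SimpleGraph.sup_adj _ _ _ _).mpr (Or.inl huw)
  have hAwv : (G ⊔ H).Adj w v := (SimpleGraph.sup_adj _ _ _ _).mpr (Or.inr hwv)
  have hwc : w ∈ c.supp := (ConnectedComponent.eq).mpr hAuw.symm.reachable
  have hvc : v ∈ c.supp :=
    (ConnectedComponent.eq).mpr (hAwv.symm.reachable.trans hAuw.symm.reachable)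
  rcases hcl c with ⟨⟨e⟩⟩ | ⟨⟨e⟩⟩ | ⟨⟨e⟩⟩
  · -- K1: contradiction
    exfalso
    have : (⟨u, hu⟩ : c.supp) = ⟨w, hwc⟩ := e.toEquiv.injective (Subsingleton.elim _ _)
    exact huw.ne (congrArg Subtype.val this)
  · -- K2: contradiction since u, w, v pairwise distinct
    exfalso
    have hdec : ∀ a b c : Fin 2, a ≠ b → a ≠ c → b ≠ c → False := by decide
    have hne1 : (⟨u, hu⟩ : c.supp) ≠ ⟨w, hwc⟩ := fun h => huw.ne (congrArg Subtype.val h)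
    have hne2 : (⟨u, hu⟩ : c.supp) ≠ ⟨v, hvc⟩ := fun h => hvu ((congrArg Subtype.val h).symm)
    have hne3 : (⟨w, hwc⟩ : c.supp) ≠ ⟨v, hvc⟩ := fun h => hwv.ne (congrArg Subtype.val h)
    exact hdec (e ⟨u, hu⟩) (e ⟨w, hwc⟩) (e ⟨v, hvc⟩)
      (fun h => hne1 (e.toEquiv.injective h)) (fun h => hne2 (e.toEquiv.injective h))
      (fun h => hne3 (e.toEquiv.injective h))
  · -- C4 case
    have two_nbrs : ∀ x (hx : x ∈ c.supp), ∃ y z : V, y ∈ c.supp ∧ z ∈ c.supp ∧ y ≠ z ∧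
        (G ⊔ H).Adj x y ∧ (G ⊔ H).Adj x z := by
      intro x hx
      have key4 : ∀ i : Fin 4, ∃ j k : Fin 4, j ≠ k ∧ (cycleGraph 4).Adj i j ∧
          (cycleGraph 4).Adj i k := by decide
      obtain ⟨j, k, hjk, hij, hik⟩ := key4 (e ⟨x, hx⟩)
      refine ⟨(e.symm j).1, (e.symm k).1, (e.symm j).2, (e.symm k).2, ?_, ?_, ?_⟩
      · intro h
        exact hjk (by
          have : e.symm j = e.symm k := Subtype.ext h
          simpa using congrArg e this)
      · have : (cycleGraph 4).Adj (e ⟨x, hx⟩) (e (e.symm j)) := by simpa using hij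
        exact e.map_rel_iff.mp this
      · have : (cycleGraph 4).Adj (e ⟨x, hx⟩) (e (e.symm k)) := by simpa using hik
        exact e.map_rel_iff.mp this
    -- u has an H-neighbor
    obtain ⟨y, z, hy, hz, hyz, hay, haz⟩ := two_nbrs u hu
    have hub : ∃ b, H.Adj u b := by
      rcases (SimpleGraph.sup_adj _ _ _ _).mp hay with h1 | h1
      · rcases (SimpleGraph.sup_adj _ _ _ _).mp haz with h2 | h2
        · exact absurd (hG u y z h1 h2) hyz
        · exact ⟨z, h2⟩
      · exact ⟨y, h1⟩
    obtain ⟨b, hub⟩ := hub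
    -- v has a G-neighbor
    obtain ⟨y', z', hy', hz', hyz', hay', haz'⟩ := two_nbrs v hvc
    have hvx : ∃ x, G.Adj v x := by
      rcases (SimpleGraph.sup_adj _ _ _ _).mp hay' with h1 | h1
      · exact ⟨y', h1⟩
      · rcases (SimpleGraph.sup_adj _ _ _ _).mp haz' with h2 | h2
        · exact ⟨z', h2⟩
        · exact absurd (hH v y' z' h1 h2) hyz'
    obtain ⟨x, hvxadj⟩ := hvx
    by_cases hxb : x = b
    · exact ⟨b, hub, (hxb ▸ hvxadj).symm⟩
    · exfalso
      have hbc : b ∈ c.supp := (ConnectedComponent.eq).mpr ((SimpleGraph.sup_adj _ _ _ _).mpr (Or.inr hub)).symm.reachable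
      have hxc : x ∈ c.supp := by
        have : (G ⊔ H).Reachable v u := (hAwv.symm.reachable.trans hAuw.symm.reachable)
        exact (ConnectedComponent.eq).mpr (((SimpleGraph.sup_adj _ _ _ _).mpr (Or.inl hvxadj)).symm.reachable.trans this)
      -- pairwise distinctness of u w v b x
      have d1 : u ≠ w := huw.ne
      have d2 : u ≠ v := Ne.symm hvu
      have d3 : u ≠ b := hub.ne
      have d4 : u ≠ x := by
        rintro rfl
        exact hwv.ne (hG u v w hvxadj.symm huw).symm
      have d5 : w ≠ v := hwv.ne
      have d6 : w ≠ b := by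
        rintro rfl
        exact hvu (hH w v u hwv hub.symm)
      have d7 : w ≠ x := by
        rintro rfl
        exact hvu (hG w v u hvxadj.symm huw.symm)
      have d8 : v ≠ b := by
        rintro rfl
        exact huw.ne (hH v u w hub.symm hwv.symm)
      have d9 : v ≠ x := hvxadj.ne
      have d10 : b ≠ x := Ne.symm hxb
      have hdec : ∀ a b c d f : Fin 4, ¬(a ≠ b ∧ a ≠ c ∧ a ≠ d ∧ a ≠ f ∧ b ≠ c ∧ b ≠ d ∧
          b ≠ f ∧ c ≠ d ∧ c ≠ f ∧ d ≠ f) := by decide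
      have inj : ∀ (p q : c.supp), p.1 ≠ q.1 → e p ≠ e q := fun p q hpq h =>
        hpq (congrArg Subtype.val (e.toEquiv.injective h))
      exact hdec (e ⟨u, hu⟩) (e ⟨w, hwc⟩) (e ⟨v, hvc⟩) (e ⟨b, hbc⟩) (e ⟨x, hxc⟩)
        ⟨inj _ _ d1, inj _ _ d2, inj _ _ d3, inj _ _ d4, inj _ _ d5,
         inj _ _ d6, inj _ _ d7, inj _ _ d8, inj _ _ d9, inj _ _ d10⟩

open SimpleGraph in
lemma aux_forward (G H : SimpleGraph V)
    (hG : ∀ v w w' : V, G.Adj v w → G.Adj v w' → w = w')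
    (hH : ∀ v w w' : V, H.Adj v w → H.Adj v w' → w = w')
    (hC : ∀ u v, (∃ w, G.Adj u w ∧ H.Adj w v) ↔ (∃ w, H.Adj u w ∧ G.Adj w v)) :
    ∀ c : (G ⊔ H).ConnectedComponent,
        Nonempty (SimpleGraph.induce c.supp (G ⊔ H) ≃g (⊥ : SimpleGraph (Fin 1))) ∨
        Nonempty (SimpleGraph.induce c.supp (G ⊔ H) ≃g (⊤ : SimpleGraph (Fin 2))) ∨
        Nonempty (SimpleGraph.induce c.supp (G ⊔ H) ≃g SimpleGraph.cycleGraph 4) := by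
  intro c
  obtain ⟨v0, hv0⟩ := c.exists_rep
  have hv0' : (G ⊔ H).connectedComponentMk v0 = c := hv0
  subst hv0'
  -- helper to build the K2 case
  have K2build : ∀ p : V, (G ⊔ H).Adj v0 p → (∀ y, (G ⊔ H).Adj v0 y → y = p) →
      (∀ y, (G ⊔ H).Adj p y → y = v0) →
      Nonempty (SimpleGraph.induce ((G ⊔ H).connectedComponentMk v0).supp (G ⊔ H) ≃g
        (⊤ : SimpleGraph (Fin 2))) := by
    intro p hp hv0nb hpnb
    have hne : v0 ≠ p := hp.ne
    have hsupp : ((G ⊔ H).connectedComponentMk v0).supp = Set.range ![v0, p] := by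
      rw [aux_supp_eq (S := {v0, p}) (Or.inl rfl)]
      · ext x
        simp only [Set.mem_insert_iff, Set.mem_singleton_iff, Set.mem_range]
        constructor
        · rintro (rfl | rfl)
          exacts [⟨0, rfl⟩, ⟨1, rfl⟩]
        · rintro ⟨i, rfl⟩
          fin_cases i <;> simp
      · rintro x y (rfl | rfl) hxy
        · exact Or.inr (hv0nb y hxy)
        · exact Or.inl (hpnb y hxy)
      · rintro x (rfl | rfl)
        · exact Reachable.refl _
        · exact hp.reachable
    have hinj : Function.Injective ![v0, p] := by
      intro i j hij
      fin_cases i <;> fin_cases j <;>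
          simp only [Matrix.cons_val_zero, Matrix.cons_val_one, Matrix.head_cons] at hij <;>
        first
          | rfl
          | exact absurd hij hne
          | exact absurd hij.symm hne
    have hadj : ∀ i j : Fin 2, (G ⊔ H).Adj (![v0, p] i) (![v0, p] j) ↔
        (⊤ : SimpleGraph (Fin 2)).Adj i j := by
      intro i j
      fin_cases i <;> fin_cases j <;>
        simp only [Matrix.cons_val_zero, Matrix.cons_val_one, Matrix.head_cons]
      · exact iff_of_false ((G ⊔ H).loopless.irrefl v0) (by decide)
      · exact iff_of_true hp (by decide)
      · exact iff_of_true hp.symm (by decide)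
      · exact iff_of_false ((G ⊔ H).loopless.irrefl p) (by decide)
    rw [hsupp]
    exact aux_iso_of_map _ _ _ hinj hadj
  by_cases hGn : ∃ a, G.Adj v0 a
  · obtain ⟨a, ha⟩ := hGn
    by_cases hHn : ∃ b, H.Adj v0 b
    · obtain ⟨b, hb⟩ := hHn
      by_cases hab : b = a
      · -- K2
        rw [hab] at hb
        refine Or.inr (Or.inl (K2build a ((SimpleGraph.sup_adj _ _ _ _).mpr (Or.inl ha)) ?_ ?_))
        · rintro y (hy | hy)
          · exact hG v0 y a hy ha
          · exact hH v0 y a hy hb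
        · rintro y (hy | hy)
          · exact hG a y v0 hy ha.symm
          · obtain ⟨w', hw1, hw2⟩ := (hC v0 y).mp ⟨a, ha, hy⟩
            have hwa : w' = a := hH v0 w' a hw1 hb
            rw [hwa] at hw2
            exact hG a y v0 hw2 ha.symm
      · -- C4 case
        obtain ⟨c0, hac0, hc0b⟩ := (hC a b).mp ⟨v0, ha.symm, hb⟩
        refine Or.inr (Or.inr ?_)
        -- basic adjacency facts in the union graph
        have hA1 : (G ⊔ H).Adj v0 a := (SimpleGraph.sup_adj _ _ _ _).mpr (Or.inl ha)
        have hA2 : (G ⊔ H).Adj a c0 := (SimpleGraph.sup_adj _ _ _ _).mpr (Or.inr hac0)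
        have hA3 : (G ⊔ H).Adj c0 b := (SimpleGraph.sup_adj _ _ _ _).mpr (Or.inl hc0b)
        have hA4 : (G ⊔ H).Adj b v0 := (SimpleGraph.sup_adj _ _ _ _).mpr (Or.inr hb.symm)
        -- distinctness
        have n1 : v0 ≠ a := ha.ne
        have n2 : v0 ≠ b := hb.ne
        have n3 : a ≠ b := fun h => hab h.symm
        have n4 : a ≠ c0 := hac0.ne
        have n5 : c0 ≠ b := hc0b.ne
        have n6 : v0 ≠ c0 := by
          rintro rfl
          exact n3 (hH v0 a b hac0.symm hb)
        -- non-edges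
        have hN1 : ¬ (G ⊔ H).Adj v0 c0 := by
          intro hx
          rcases (SimpleGraph.sup_adj _ _ _ _).mp hx with h | h
          · exact n4 (hG v0 c0 a h ha).symm
          · exact n5 (hH v0 c0 b h hb)
        have hN2 : ¬ (G ⊔ H).Adj a b := by
          intro hx
          rcases (SimpleGraph.sup_adj _ _ _ _).mp hx with h | h
          · exact n2 (hG a b v0 h ha.symm).symm
          · exact n5 (hH a b c0 h hac0).symm
        have hsupp : ((G ⊔ H).connectedComponentMk v0).supp = Set.range ![v0, a, c0, b] := by
          rw [aux_supp_eq (S := ({v0, a, c0, b} : Set V)) (Or.inl rfl)]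
          · ext x
            simp only [Set.mem_insert_iff, Set.mem_singleton_iff, Set.mem_range]
            constructor
            · rintro (rfl | rfl | rfl | rfl)
              exacts [⟨0, rfl⟩, ⟨1, rfl⟩, ⟨2, rfl⟩, ⟨3, rfl⟩]
            · rintro ⟨i, rfl⟩
              fin_cases i
              exacts [Or.inl rfl, Or.inr (Or.inl rfl), Or.inr (Or.inr (Or.inl rfl)),
                Or.inr (Or.inr (Or.inr rfl))]
          · rintro x y hx hxy
            rcases hx with h1 | h1 | h1 | h1 <;> rw [h1] at hxy <;>
              rcases (SimpleGraph.sup_adj _ _ _ _).mp hxy with h | h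
            · exact Or.inr (Or.inl (hG v0 y a h ha))
            · exact Or.inr (Or.inr (Or.inr (hH v0 y b h hb)))
            · exact Or.inl (hG a y v0 h ha.symm)
            · exact Or.inr (Or.inr (Or.inl (hH a y c0 h hac0)))
            · exact Or.inr (Or.inr (Or.inr (hG c0 y b h hc0b)))
            · exact Or.inr (Or.inl (hH c0 y a h hac0.symm))
            · exact Or.inr (Or.inr (Or.inl (hG b y c0 h hc0b.symm)))
            · exact Or.inl (hH b y v0 h hb.symm)
          · rintro x (rfl | rfl | rfl | rfl)
            · exact Reachable.refl _
            · exact hA1.reachable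
            · exact hA1.reachable.trans hA2.reachable
            · exact (hA4.symm).reachable
        have hinj : Function.Injective ![v0, a, c0, b] := by
          intro i j hij
          fin_cases i <;> fin_cases j <;>
            first
              | rfl
              | exact absurd hij n1 | exact absurd hij.symm n1
              | exact absurd hij n2 | exact absurd hij.symm n2
              | exact absurd hij n3 | exact absurd hij.symm n3
              | exact absurd hij n4 | exact absurd hij.symm n4
              | exact absurd hij n5 | exact absurd hij.symm n5
              | exact absurd hij n6 | exact absurd hij.symm n6
        have hadj : ∀ i j : Fin 4, (G ⊔ H).Adj (![v0, a, c0, b] i) (![v0, a, c0, b] j) ↔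
            (cycleGraph 4).Adj i j := by
          intro i j
          fin_cases i <;> fin_cases j <;>
            first
              | exact iff_of_false ((G ⊔ H).loopless.irrefl _) (by decide)
              | exact iff_of_true hA1 (by decide)
              | exact iff_of_true hA1.symm (by decide)
              | exact iff_of_true hA2 (by decide)
              | exact iff_of_true hA2.symm (by decide)
              | exact iff_of_true hA3 (by decide)
              | exact iff_of_true hA3.symm (by decide)
              | exact iff_of_true hA4 (by decide)
              | exact iff_of_true hA4.symm (by decide)
              | exact iff_of_false hN1 (by decide)
              | exact iff_of_false (fun h => hN1 h.symm) (by decide)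
              | exact iff_of_false hN2 (by decide)
              | exact iff_of_false (fun h => hN2 h.symm) (by decide)
        rw [hsupp]
        exact aux_iso_of_map _ _ _ hinj hadj
    · -- only G neighbor: K2
      push_neg at hHn
      refine Or.inr (Or.inl (K2build a ((SimpleGraph.sup_adj _ _ _ _).mpr (Or.inl ha)) ?_ ?_))
      · rintro y (hy | hy)
        · exact hG v0 y a hy ha
        · exact absurd hy (hHn y)
      · rintro y (hy | hy)
        · exact hG a y v0 hy ha.symm
        · obtain ⟨w', hw1, _⟩ := (hC v0 y).mp ⟨a, ha, hy⟩
          exact absurd hw1 (hHn w')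
  · by_cases hHn : ∃ b, H.Adj v0 b
    · -- only H neighbor: K2
      push_neg at hGn
      obtain ⟨b, hb⟩ := hHn
      refine Or.inr (Or.inl (K2build b ((SimpleGraph.sup_adj _ _ _ _).mpr (Or.inr hb)) ?_ ?_))
      · rintro y (hy | hy)
        · exact absurd hy (hGn y)
        · exact hH v0 y b hy hb
      · rintro y (hy | hy)
        · obtain ⟨w', hw1, _⟩ := (hC v0 y).mpr ⟨b, hb, hy⟩
          exact absurd hw1 (hGn w')
        · exact hH b y v0 hy hb.symm
    · -- isolated: K1
      push_neg at hGn; push_neg at hHn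
      refine Or.inl ?_
      have hsupp : ((G ⊔ H).connectedComponentMk v0).supp = Set.range ![v0] := by
        rw [aux_supp_eq (S := {v0}) rfl]
        · ext x
          simp only [Set.mem_singleton_iff, Set.mem_range]
          constructor
          · rintro rfl; exact ⟨0, rfl⟩
          · rintro ⟨i, rfl⟩; fin_cases i; simp
        · rintro x y rfl (hxy | hxy)
          · exact absurd hxy (hGn y)
          · exact absurd hxy (hHn y)
        · rintro x rfl; exact Reachable.refl _
      have hinj : Function.Injective ![v0] := fun i j _ => Subsingleton.elim i j
      have hadj : ∀ i j : Fin 1, (G ⊔ H).Adj (![v0] i) (![v0] j) ↔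
          (⊥ : SimpleGraph (Fin 1)).Adj i j := by
        intro i j
        fin_cases i <;> fin_cases j <;> simp only [Matrix.cons_val_zero]
        exact iff_of_false ((G ⊔ H).loopless.irrefl v0) (by simp)
      rw [hsupp]
      exact aux_iso_of_map _ _ _ hinj hadj

end Aux

/-- Let `M' = (V, E')` and `M'' = (V, E'')` be matchings viewed as simple
graphs on a common finite vertex set `V` (no two edges of either graph share a vertex, i.e.
every vertex has at most one neighbor), with adjacency matrices `A'` and `A''` over `ℝ`.
Then `A'` and `A''` commute if and only if every connected component of the union graph
`(V, E' ∪ E'')` is an isolated vertex (`K₁`), a single edge (`K₂`, the complete graph on two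
vertices), or a cycle on 4 vertices (`C₄`). -/
theorem stmt_2 {V : Type*} [Fintype V] [DecidableEq V]
    (M' M'' : SimpleGraph V) [DecidableRel M'.Adj] [DecidableRel M''.Adj]
    (hM' : ∀ v w w' : V, M'.Adj v w → M'.Adj v w' → w = w')
    (hM'' : ∀ v w w' : V, M''.Adj v w → M''.Adj v w' → w = w') :
    M'.adjMatrix ℝ * M''.adjMatrix ℝ = M''.adjMatrix ℝ * M'.adjMatrix ℝ ↔
      ∀ c : (M' ⊔ M'').ConnectedComponent,
        Nonempty (SimpleGraph.induce c.supp (M' ⊔ M'') ≃g (⊥ : SimpleGraph (Fin 1))) ∨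
        Nonempty (SimpleGraph.induce c.supp (M' ⊔ M'') ≃g (⊤ : SimpleGraph (Fin 2))) ∨
        Nonempty (SimpleGraph.induce c.supp (M' ⊔ M'') ≃g SimpleGraph.cycleGraph 4) := by
  constructor
  · intro hcomm
    have hC : ∀ u v, (∃ w, M'.Adj u w ∧ M''.Adj w v) ↔ (∃ w, M''.Adj u w ∧ M'.Adj w v) := by
      intro u v
      have h := congrFun (congrFun hcomm u) v
      rw [aux_entry M' M'' hM' u v, aux_entry M'' M' hM'' u v] at h
      constructor
      · intro hP
        by_contra hQ
        rw [if_pos hP, if_neg hQ] at h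
        norm_num at h
      · intro hQ
        by_contra hP
        rw [if_neg hP, if_pos hQ] at h
        norm_num at h
    exact aux_forward M' M'' hM' hM'' hC
  · intro hcl
    have h1 := aux_key M' M'' hM' hM'' hcl
    have hcl' : ∀ c : (M'' ⊔ M').ConnectedComponent,
        Nonempty (SimpleGraph.induce c.supp (M'' ⊔ M') ≃g (⊥ : SimpleGraph (Fin 1))) ∨
        Nonempty (SimpleGraph.induce c.supp (M'' ⊔ M') ≃g (⊤ : SimpleGraph (Fin 2))) ∨
        Nonempty (SimpleGraph.induce c.supp (M'' ⊔ M') ≃g SimpleGraph.cycleGraph 4) := by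
      rw [sup_comm M'' M']
      exact hcl
    have h2 := aux_key M'' M' hM'' hM' hcl'
    ext u v
    rw [aux_entry M' M'' hM' u v, aux_entry M'' M' hM'' u v]
    exact if_congr ⟨h1 u v, h2 u v⟩ rfl rfl
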